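/- (Acyclic Orderability Theorem, balance implies orderable direction) Let D be a finite acyclic directed multigraph and p : V(D) → ℤ≥0 a pebbling configuration. If every vertex v satisfies p(v) + deg⁻_D(v) − 2·deg⁺_D(v) ≥ 0, then there is an ordering of all the edges of D such that performing pebbling moves along the edges in that order (each move across arc (u,v) removes two pebbles from u and adds one pebble to v) is a valid sequence of pebbling moves starting from p (i.e., at the time each move is performed, its tail has at least two pebbles). -/

import Mathlib

open Finset

variable {V : Type*}

/-- A single pebbling move: remove two pebbles from `u`, add one to an adjacent `v`. -/
def PebMove [DecidableEq V] (G : SimpleGraph V) (p q : V → ℕ) : Prop :=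
  ∃ u v : V, G.Adj u v ∧ 2 ≤ p u ∧
    q = fun w => if w = u then p u - 2 else if w = v then p v + 1 else p w

/-- A configuration is `r`-solvable if some sequence of pebbling moves puts a pebble on `r`. -/
def Solvable [DecidableEq V] (G : SimpleGraph V) (p : V → ℕ) (r : V) : Prop :=
  ∃ q : V → ℕ, Relation.ReflTransGen (PebMove G) p q ∧ 1 ≤ q r

/-- The `r`-rooted pebbling number `π(G, r)`. -/
noncomputable def pebNum [DecidableEq V] [Fintype V] (G : SimpleGraph V) (r : V) : ℕ :=
  sInf {m | ∀ p : V → ℕ, (∑ v, p v) = m → Solvable G p r}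

/-- The support-restricted pebbling number `π_S(G, r)`. -/
noncomputable def pebSupp [DecidableEq V] [Fintype V] (G : SimpleGraph V) (r : V) (S : Finset V) : ℕ :=
  sInf {m | ∀ p : V → ℕ, (∀ v, p v ≠ 0 → v ∈ S) → (∑ v, p v) = m → Solvable G p r}

/-- The rooted support-`k` pebbling number `π_k(G, r)`. -/
noncomputable def pebSuppK [DecidableEq V] [Fintype V] (G : SimpleGraph V) (r : V) (k : ℕ) : ℕ :=
  (Finset.univ.powersetCard k).sup (pebSupp G r)

/-- The support-`k` pebbling number `π_k(G)`. -/
noncomputable def pebKAll [DecidableEq V] [Fintype V] (G : SimpleGraph V) (k : ℕ) : ℕ :=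
  sInf {m | ∀ (r : V) (p : V → ℕ),
    (Finset.univ.filter fun v => p v ≠ 0).card ≤ k → (∑ v, p v) = m → Solvable G p r}

/-- The pebbling number `π(G)`. -/
noncomputable def pebAll [DecidableEq V] [Fintype V] (G : SimpleGraph V) : ℕ :=
  sInf {m | ∀ (r : V) (p : V → ℕ), (∑ v, p v) = m → Solvable G p r}

/-- Result of a pebbling move along the arc `a` (two removed from the tail, one added at the head). -/
def applyArc [DecidableEq V] (p : V → ℕ) (a : V × V) : V → ℕ :=
  fun w => (if w = a.1 then p a.1 - 2 else p w) + (if w = a.2 then 1 else 0)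

/-- A list of arcs is a valid sequence of pebbling moves from `p` if each move's tail
has at least two pebbles when the move is performed. -/
def ValidSeq [DecidableEq V] : (V → ℕ) → List (V × V) → Prop
  | _, [] => True
  | p, a :: l => 2 ≤ p a.1 ∧ ValidSeq (applyArc p a) l

/-- In-degree of a vertex in a directed multigraph given by a multiset of arcs. -/
def inDeg [DecidableEq V] (D : Multiset (V × V)) (v : V) : ℕ :=
  (D.filter fun a => a.2 = v).card

/-- Out-degree of a vertex in a directed multigraph given by a multiset of arcs. -/
def outDeg [DecidableEq V] (D : Multiset (V × V)) (v : V) : ℕ :=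
  (D.filter fun a => a.1 = v).card

/-- A nonempty list of arcs forming a directed cycle (head of each arc is tail of the next,
cyclically). -/
def IsDiCycle (l : List (V × V)) : Prop :=
  l ≠ [] ∧ ∀ i : Fin l.length,
    (l.get i).2 = (l.get ⟨(↑i + 1) % l.length, Nat.mod_lt _ (by have := i.isLt; omega)⟩).1

/-- A directed multigraph (multiset of arcs) is acyclic if it contains no directed cycle. -/
def AcyclicArcs (D : Multiset (V × V)) : Prop :=
  ¬ ∃ l : List (V × V), IsDiCycle l ∧ (↑l : Multiset (V × V)) ≤ D

/-- The directed multigraph containing each arc `a` with multiplicity `z a`. -/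
def arcsMultiset [Fintype V] (z : V × V → ℕ) : Multiset (V × V) :=
  ∑ a : V × V, z a • ({a} : Multiset (V × V))

lemma inDeg_cons [DecidableEq V] (a : V × V) (s : Multiset (V × V)) (w : V) :
    inDeg (a ::ₘ s) w = (if a.2 = w then 1 else 0) + inDeg s w := by
  simp only [inDeg, Multiset.filter_cons]
  split <;> simp <;> omega

lemma outDeg_cons [DecidableEq V] (a : V × V) (s : Multiset (V × V)) (w : V) :
    outDeg (a ::ₘ s) w = (if a.1 = w then 1 else 0) + outDeg s w := by
  simp only [outDeg, Multiset.filter_cons]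
  split <;> simp <;> omega

lemma no_loop [DecidableEq V] {D : Multiset (V × V)} (hacyc : AcyclicArcs D)
    {a : V × V} (ha : a ∈ D) : a.1 ≠ a.2 := by
  intro h
  apply hacyc
  refine ⟨[a], ⟨by simp, ?_⟩, by simpa using ha⟩
  intro i
  fin_cases i
  simp [List.get, h]

lemma exists_source [DecidableEq V] [Fintype V] {D : Multiset (V × V)}
    (hacyc : AcyclicArcs D) (hne : D ≠ 0) :
    ∃ a ∈ D, inDeg D a.1 = 0 := by
  classical
  by_contra hc
  push_neg at hc
  have hg : ∀ a : {a : V × V // a ∈ D}, ∃ b : {a : V × V // a ∈ D},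
      (b : V × V).2 = (a : V × V).1 := by
    rintro ⟨a, ha⟩
    have h1 : (D.filter fun x => x.2 = a.1) ≠ 0 := by
      intro h
      exact hc a ha (by simp [inDeg, h])
    obtain ⟨b, hb⟩ := Multiset.exists_mem_of_ne_zero h1
    rw [Multiset.mem_filter] at hb
    exact ⟨⟨b, hb.1⟩, hb.2⟩
  choose g hgspec using hg
  obtain ⟨a0v, ha0⟩ := Multiset.exists_mem_of_ne_zero hne
  set a0 : {a : V × V // a ∈ D} := ⟨a0v, ha0⟩
  obtain ⟨i, j, hij, heq⟩ := Finite.exists_ne_map_eq_of_infinite (fun n : ℕ => g^[n] a0)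
  have hex : ∃ k, 0 < k ∧ g^[k] (g^[min i j] a0) = g^[min i j] a0 := by
    rcases hij.lt_or_gt with h | h
    · refine ⟨j - i, by omega, ?_⟩
      rw [min_eq_left h.le, ← Function.iterate_add_apply, show j - i + i = j by omega]
      exact heq.symm
    · refine ⟨i - j, by omega, ?_⟩
      rw [min_eq_right h.le, ← Function.iterate_add_apply, show i - j + j = i by omega]
      exact heq
  set b := g^[min i j] a0 with hb
  have hP : ∃ k, 0 < k ∧ g^[k] b = b := hex
  set k := Nat.find hP with hkdef
  obtain ⟨hkpos, hkper⟩ := Nat.find_spec hP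
  set seq : ℕ → V × V := fun m => ((g^[m] b : {a : V × V // a ∈ D}) : V × V) with hseq
  have hstep : ∀ m, (seq (m + 1)).2 = (seq m).1 := by
    intro m
    simp only [hseq, Function.iterate_succ_apply']
    exact hgspec _
  have hmem : ∀ m, seq m ∈ D := fun m => (g^[m] b).2
  have hseqk : seq k = seq 0 := by simp [hseq, hkdef, hkper]
  have hinj : ∀ i j, i < k → j < k → seq i = seq j → i = j := by
    have key : ∀ i j, i < j → j < k → seq i ≠ seq j := by
      intro i j hij hjk he
      have he' : g^[i] b = g^[j] b := Subtype.coe_injective he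
      have : g^[k - j + i] b = b := by
        calc g^[k - j + i] b = g^[k - j] (g^[i] b) := Function.iterate_add_apply g (k-j) i b
          _ = g^[k - j] (g^[j] b) := by rw [he']
          _ = g^[k - j + j] b := (Function.iterate_add_apply g (k-j) j b).symm
          _ = g^[k] b := by rw [Nat.sub_add_cancel hjk.le]
          _ = b := hkper
      exact Nat.find_min hP (show k - j + i < k by omega) ⟨by omega, this⟩
    intro i j hik hjk he
    rcases lt_trichotomy i j with h | h | h
    · exact absurd he (key i j h hjk)
    · exact h
    · exact absurd he.symm (key j i h hik)
  set l : List (V × V) := (List.range k).map (fun i => seq (k - 1 - i)) with hl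
  have hlen : l.length = k := by simp [hl]
  have hget : ∀ i : Fin l.length, l.get i = seq (k - 1 - i) := by
    intro i
    simp [hl]
  apply hacyc
  refine ⟨l, ⟨?_, ?_⟩, ?_⟩
  · intro h
    have := hlen
    rw [h] at this
    simp at this
    omega
  · intro i
    obtain ⟨m, hm⟩ := i
    rw [hget, hget]
    simp only [Fin.val_mk]
    have hmk : m < k := by omega
    by_cases hcase : m + 1 = k
    · have h1 : (m + 1) % l.length = 0 := by
        rw [hlen, hcase, Nat.mod_self]
      rw [h1]
      have h2 : k - 1 - m = 0 := by omega
      rw [h2]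
      have h3 : k - 1 - 0 = k - 1 := by omega
      rw [h3, ← hseqk, show k = (k - 1) + 1 by omega]
      exact hstep (k - 1)
    · have h1 : (m + 1) % l.length = m + 1 := by
        rw [hlen]; exact Nat.mod_eq_of_lt (by omega)
      rw [h1]
      have h2 : k - 1 - m = (k - 1 - (m + 1)) + 1 := by omega
      rw [h2]
      exact hstep _
  · have hnd : l.Nodup := by
      apply List.Nodup.map_on _ List.nodup_range
      intro x hx y hy hxy
      rw [List.mem_range] at hx hy
      have := hinj _ _ (by omega) (by omega) hxy
      omega
    rw [Multiset.le_iff_subset (Multiset.coe_nodup.mpr hnd)]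
    intro x hx
    obtain ⟨m, _, rfl⟩ := List.mem_map.mp (Multiset.mem_coe.mp hx)
    exact hmem _

lemma stmt4_aux [DecidableEq V] [Fintype V] (n : ℕ) :
    ∀ (D : Multiset (V × V)) (p : V → ℕ), D.card = n → AcyclicArcs D →
    (∀ v : V, 0 ≤ (p v : ℤ) + inDeg D v - 2 * outDeg D v) →
    ∃ l : List (V × V), (↑l : Multiset (V × V)) = D ∧ ValidSeq p l := by
  induction n with
  | zero =>
    intro D p hcard _ _
    refine ⟨[], ?_, trivial⟩
    simp [Multiset.card_eq_zero.mp hcard]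
  | succ n ih =>
    intro D p hcard hacyc hbal
    have hne : D ≠ 0 := by
      intro h; rw [h] at hcard; simp at hcard
    obtain ⟨a, ha, hin0⟩ := exists_source hacyc hne
    set u := a.1 with hu
    set v := a.2 with hv
    have huv : u ≠ v := no_loop hacyc ha
    set E := D.erase a with hE
    have hD : D = a ::ₘ E := (Multiset.cons_erase ha).symm
    have hout : 1 ≤ outDeg D u := by
      have hmem : a ∈ D.filter (fun x => x.1 = u) := Multiset.mem_filter.mpr ⟨ha, rfl⟩
      unfold outDeg
      exact Multiset.card_pos.mpr (fun h => by rw [h] at hmem; exact absurd hmem (Multiset.notMem_zero a))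
    have hpu : 2 ≤ p u := by
      have := hbal u
      rw [hin0] at this
      have h2 : (1 : ℤ) ≤ outDeg D u := by exact_mod_cast hout
      omega
    have hinE : ∀ w, (inDeg D w : ℤ) = inDeg E w + (if w = v then 1 else 0) := by
      intro w
      rw [hD, inDeg_cons, ← hv]
      by_cases h : w = v
      · rw [if_pos h.symm, if_pos h]; push_cast; ring
      · rw [if_neg (fun hh => h hh.symm), if_neg h]; push_cast; ring
    have houtE : ∀ w, (outDeg D w : ℤ) = outDeg E w + (if w = u then 1 else 0) := by
      intro w
      rw [hD, outDeg_cons, ← hu]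
      by_cases h : w = u
      · rw [if_pos h.symm, if_pos h]; push_cast; ring
      · rw [if_neg (fun hh => h hh.symm), if_neg h]; push_cast; ring
    have hval : ∀ w, (applyArc p a w : ℤ) =
        (if w = u then (p u : ℤ) - 2 else p w) + (if w = v then 1 else 0) := by
      intro w
      unfold applyArc
      rw [← hu, ← hv]
      by_cases h1 : w = u
      · by_cases h2 : w = v
        · exact absurd (h1.symm.trans h2) huv
        · rw [if_pos h1, if_pos h1, if_neg h2, if_neg h2]
          omega
      · rw [if_neg h1, if_neg h1]
        by_cases h2 : w = v
        · rw [if_pos h2, if_pos h2]; push_cast; ring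
        · rw [if_neg h2, if_neg h2]; push_cast; ring
    have hbal' : ∀ w : V, 0 ≤ ((applyArc p a w : ℤ)) + inDeg E w - 2 * outDeg E w := by
      intro w
      have hb := hbal w
      rw [hinE w, houtE w] at hb
      rw [hval w]
      by_cases h1 : w = u
      · by_cases h2 : w = v
        · exact absurd (h1.symm.trans h2) huv
        · subst h1
          rw [if_pos rfl, if_neg h2]
          rw [if_pos rfl, if_neg h2] at hb
          omega
      · by_cases h2 : w = v
        · rw [if_neg h1, if_pos h2]
          rw [if_neg h1, if_pos h2] at hb
          omega
        · rw [if_neg h1, if_neg h2]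
          rw [if_neg h1, if_neg h2] at hb
          omega
    have hacycE : AcyclicArcs E := by
      intro ⟨l, hl1, hl2⟩
      exact hacyc ⟨l, hl1, hl2.trans (Multiset.erase_le a D)⟩
    have hcardE : E.card = n := by
      have := congrArg Multiset.card hD
      simp at this
      omega
    obtain ⟨l, hl1, hl2⟩ := ih E (applyArc p a) hcardE hacycE hbal'
    refine ⟨a :: l, ?_, hpu, hl2⟩
    rw [hD, ← hl1]
    rfl

/-- Acyclic Orderability Theorem (balance implies orderable): if an acyclic directed
multigraph satisfies the balance condition with respect to `p`, then some ordering of its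
edges is a valid sequence of pebbling moves starting from `p`. -/
theorem stmt4 [DecidableEq V] [Fintype V] (D : Multiset (V × V)) (p : V → ℕ)
    (hacyc : AcyclicArcs D)
    (hbal : ∀ v : V, 0 ≤ (p v : ℤ) + inDeg D v - 2 * outDeg D v) :
    ∃ l : List (V × V), (↑l : Multiset (V × V)) = D ∧ ValidSeq p l :=
  stmt4_aux D.card D p rfl hacyc hbal
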